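/- For an odd integer a = 2k+1, let A = Z/aZ and define f: A -> Z by sending each class to its representative in {-k,...,k}. Then the zero set Z(f) has exactly one element, and the problem set P(f) = {(x,y) in A x A : f(x+y) != f(x) + f(y)} has cardinality exactly k*(k+1). -/

import Mathlib

open Finset

lemma sum_natAbs_Icc (k : ℕ) :
    ∑ u ∈ Finset.Icc (-(k : ℤ)) k, u.natAbs = k * (k + 1) := by
  induction k with
  | zero => simp
  | succ k ih =>
    have hset : Finset.Icc (-((k + 1 : ℕ) : ℤ)) ((k + 1 : ℕ) : ℤ) =
        insert (-((k : ℤ) + 1)) (insert ((k : ℤ) + 1) (Finset.Icc (-(k : ℤ)) k)) := by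
      ext v; simp only [Finset.mem_Icc, Finset.mem_insert]; push_cast; omega
    rw [hset, Finset.sum_insert, Finset.sum_insert, ih]
    · have h1 : (-((k : ℤ) + 1)).natAbs = k + 1 := by omega
      have h2 : ((k : ℤ) + 1).natAbs = k + 1 := by omega
      rw [h1, h2]; ring
    · simp only [Finset.mem_Icc]; omega
    · simp only [Finset.mem_insert, Finset.mem_Icc]; omega

theorem sharpness_example (k : ℕ) (f : ZMod (2 * k + 1) → ℤ)
    (hf : ∀ x, f x ∈ Set.Icc (-(k : ℤ)) (k : ℤ) ∧ ((f x : ZMod (2 * k + 1)) = x)) :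
    Nat.card {x : ZMod (2 * k + 1) // f x = 0} = 1 ∧
    Nat.card {p : ZMod (2 * k + 1) × ZMod (2 * k + 1) //
      f (p.1 + p.2) ≠ f p.1 + f p.2} = k * (k + 1) := by
  have key : ∀ u v : ℤ, u ∈ Set.Icc (-(k : ℤ)) k → v ∈ Set.Icc (-(k : ℤ)) k →
      ((u : ZMod (2 * k + 1)) = v) → u = v := by
    intro u v hu hv h
    have h0 : ((u - v : ℤ) : ZMod (2 * k + 1)) = 0 := by push_cast [h]; ring
    have hd : ((2 * k + 1 : ℕ) : ℤ) ∣ (u - v) :=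
      (ZMod.intCast_zmod_eq_zero_iff_dvd _ _).1 h0
    obtain ⟨hu1, hu2⟩ := hu; obtain ⟨hv1, hv2⟩ := hv
    have := Int.eq_zero_of_abs_lt_dvd hd (by push_cast; rw [abs_lt]; omega)
    omega
  -- f is injective
  have finj : Function.Injective f := by
    intro x y h
    have hx := (hf x).2; have hy := (hf y).2
    rw [← hx, ← hy, h]
  -- zero
  have hzero : ∀ x, f x = 0 ↔ x = 0 := by
    intro x
    constructor
    · intro h
      have := (hf x).2
      rw [h] at this; exact_mod_cast this.symm
    · rintro rfl
      exact key (f 0) 0 (hf 0).1 (by simp) (by rw [(hf 0).2]; simp)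
  constructor
  · rw [Nat.card_eq_one_iff_unique]
    constructor
    · constructor
      intro ⟨x, hx⟩ ⟨y, hy⟩
      have : x = y := by rw [(hzero x).1 hx, (hzero y).1 hy]
      simp [this]
    · exact ⟨⟨0, (hzero 0).2 rfl⟩⟩
  · -- the big count
    -- image of f is Icc
    have himg : Finset.image f Finset.univ = Finset.Icc (-(k : ℤ)) k := by
      apply Finset.eq_of_subset_of_card_le
      · intro v hv
        simp only [Finset.mem_image] at hv
        obtain ⟨x, -, rfl⟩ := hv
        simpa [Finset.mem_Icc] using (hf x).1
      · rw [Finset.card_image_of_injective _ finj, Int.card_Icc]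
        simp [ZMod.card]
        omega
    have fsurj : ∀ v : ℤ, v ∈ Set.Icc (-(k : ℤ)) k → ∃ y, f y = v := by
      intro v hv
      have : v ∈ Finset.image f Finset.univ := by
        rw [himg]; simpa [Finset.mem_Icc] using hv
      simpa using this
    -- condition rewrite
    have hcond : ∀ x y : ZMod (2 * k + 1),
        (f (x + y) ≠ f x + f y) ↔ f x + f y ∉ Set.Icc (-(k : ℤ)) k := by
      intro x y
      constructor
      · intro h hmem
        apply h
        apply key _ _ (hf (x + y)).1 hmem
        rw [(hf (x + y)).2]; push_cast [(hf x).2, (hf y).2]; ring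
      · intro h hEq
        rw [← hEq] at h
        exact h (hf (x + y)).1
    -- inner count
    have inner : ∀ x : ZMod (2 * k + 1),
        (Finset.univ.filter (fun y => f x + f y ∉ Set.Icc (-(k : ℤ)) k)).card
          = (f x).natAbs := by
      intro x
      set u := f x with hu
      obtain ⟨hu1, hu2⟩ := (hf x).1
      have hbij : (Finset.univ.filter (fun y => f x + f y ∉ Set.Icc (-(k : ℤ)) k)).card
          = ((Finset.Icc (-(k : ℤ)) k).filter (fun v => u + v ∉ Set.Icc (-(k : ℤ)) k)).card := by
        apply Finset.card_nbij f
        · intro y hy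
          simp only [Finset.mem_coe, Finset.mem_filter, Finset.mem_univ, true_and] at hy ⊢
          exact ⟨by simpa [Finset.mem_Icc] using (hf y).1, hy⟩
        · exact Set.InjOn.mono (Set.subset_univ _) (finj.injOn)
        · intro v hv
          simp only [Finset.coe_filter, Set.mem_setOf_eq, Finset.mem_Icc,
            Finset.mem_univ, true_and, Set.mem_image] at hv ⊢
          obtain ⟨hv1, hv2⟩ := hv
          obtain ⟨y, hy⟩ := fsurj v (by simpa [Set.mem_Icc] using hv1)
          exact ⟨y, by rw [hy]; exact hv2, hy⟩
      rw [hbij]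
      rcases le_or_gt 0 u with h0 | h0
      · have : (Finset.Icc (-(k : ℤ)) k).filter (fun v => u + v ∉ Set.Icc (-(k : ℤ)) k)
            = Finset.Icc (k - u + 1) k := by
          ext v
          simp only [Finset.mem_filter, Finset.mem_Icc, Set.mem_Icc, not_and_or, not_le]
          omega
        rw [this, Int.card_Icc]; omega
      · have : (Finset.Icc (-(k : ℤ)) k).filter (fun v => u + v ∉ Set.Icc (-(k : ℤ)) k)
            = Finset.Icc (-(k : ℤ)) (-(k : ℤ) - u - 1) := by
          ext v
          simp only [Finset.mem_filter, Finset.mem_Icc, Set.mem_Icc, not_and_or, not_le]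
          omega
        rw [this, Int.card_Icc]; omega
    -- assemble
    rw [Nat.card_eq_fintype_card, Fintype.card_subtype]
    have : (Finset.univ.filter (fun p : ZMod (2 * k + 1) × ZMod (2 * k + 1) =>
        f (p.1 + p.2) ≠ f p.1 + f p.2)).card
        = ∑ x : ZMod (2 * k + 1),
            (Finset.univ.filter (fun y => f x + f y ∉ Set.Icc (-(k : ℤ)) k)).card := by
      rw [Finset.card_filter, Fintype.sum_prod_type]
      refine Finset.sum_congr rfl fun x _ => ?_
      rw [Finset.card_filter]
      refine Finset.sum_congr rfl fun y _ => ?_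
      simp [hcond x y]
    rw [this]
    have : ∑ x : ZMod (2 * k + 1),
        (Finset.univ.filter (fun y => f x + f y ∉ Set.Icc (-(k : ℤ)) k)).card
        = ∑ x : ZMod (2 * k + 1), (f x).natAbs :=
      Finset.sum_congr rfl fun x _ => inner x
    rw [this]
    rw [← sum_natAbs_Icc k, ← himg]
    rw [Finset.sum_image (fun a _ b _ h => finj h)]
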